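/- Under the model X_{ij} = μ_{ij} + σ ξ_{ij} with ξ_{ij} i.i.d. N(0,1), for any integers s, q with ns ≤ q and n ≥ 2, sup over σ > 0 and over μ with max_i ‖μ_i‖_0 ≤ s of (1/σ²) E|σ̂²_Sample(X) − σ²| is at least c̃_0 · s/q, where c̃_0 > 0 is a constant (one may take c̃_0 = 1/2 by choosing nonzero entries with squares at least σ²). -/

import Mathlib

open MeasureTheory ProbabilityTheory Finset Real

section Gauss

lemma my_integral_gaussianReal01 (g : ℝ → ℝ) :
    ∫ x, g x ∂(gaussianReal 0 1) = ∫ x, gaussianPDFReal 0 1 x * g x := by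
  rw [gaussianReal_of_var_ne_zero _ one_ne_zero]
  rw [show gaussianPDF 0 1 = fun x => ((gaussianPDFReal 0 1 x).toNNReal : ENNReal) from rfl]
  rw [integral_withDensity_eq_integral_smul ((measurable_gaussianPDFReal 0 1).real_toNNReal) g]
  congr 1; ext x
  rw [NNReal.smul_def, smul_eq_mul, Real.coe_toNNReal _ (gaussianPDFReal_nonneg 0 1 x)]

lemma pdf01 (x : ℝ) : gaussianPDFReal 0 1 x = (Real.sqrt (2 * π))⁻¹ * Real.exp (-(1/2) * x ^ 2) := by
  rw [gaussianPDFReal]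
  norm_num
  left
  ring_nf

lemma my_gauss_mean : ∫ x, x ∂(gaussianReal 0 1) = 0 := by
  rw [my_integral_gaussianReal01]
  set F : ℝ → ℝ := fun x => gaussianPDFReal 0 1 x * x with hF
  have hodd : ∀ x, F (-x) = - F x := by
    intro x; simp only [hF, pdf01, neg_sq, mul_neg]
  have h1 : ∫ x, F x = ∫ x, F (-x) := by
    have h := ((Homeomorph.neg ℝ).measurableEmbedding).integral_map (μ := (volume : Measure ℝ)) F
    rw [show Measure.map (⇑(Homeomorph.neg ℝ)) (volume : Measure ℝ) = volume from
      Measure.map_neg_eq_self (volume : Measure ℝ)] at h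
    simpa using h
  have h2 : ∫ x, F x = - ∫ x, F x := by
    calc ∫ x, F x = ∫ x, - F x := by
          rw [h1]; exact congrArg (fun g => ∫ x, g x) (funext hodd)
    _ = - ∫ x, F x := integral_neg F
  linarith

lemma aux_val : ∫ x in Set.Ioi (0:ℝ), x ^ 2 * Real.exp (-(1/2) * x ^ 2) = Real.sqrt (2 * π) / 2 := by
  have h := integral_rpow_mul_exp_neg_mul_rpow (p := 2) (q := 2) (b := 1/2) two_pos
    (by norm_num) (by norm_num)
  rw [show ((2:ℝ)+1)/2 = 1/2 + 1 by norm_num] at h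
  rw [Real.Gamma_add_one (by norm_num), Real.Gamma_one_half_eq] at h
  simp_rw [Real.rpow_two] at h
  rw [h]
  have h2 : ((1:ℝ)/2) ^ (-((2:ℝ)+1)/2 : ℝ) = 2 * Real.sqrt 2 := by
    rw [show (-((2:ℝ)+1)/2 : ℝ) = -(3/2) by norm_num, one_div,
      Real.inv_rpow (by norm_num), Real.rpow_neg (by norm_num), inv_inv,
      show (3/2 : ℝ) = 1 + 1/2 by norm_num, Real.rpow_add (by norm_num), Real.rpow_one,
      ← Real.sqrt_eq_rpow]
  rw [h2, Real.sqrt_mul (by norm_num : (0:ℝ) ≤ 2)]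
  ring

lemma my_gauss_sq : ∫ x, x ^ 2 ∂(gaussianReal 0 1) = 1 := by
  rw [my_integral_gaussianReal01]
  have key : (fun x : ℝ => gaussianPDFReal 0 1 x * x ^ 2)
      = fun x : ℝ => (fun y => gaussianPDFReal 0 1 y * y ^ 2) |x| :=
    funext fun x => by simp only [pdf01, sq_abs]
  rw [key, integral_comp_abs (f := fun y => gaussianPDFReal 0 1 y * y ^ 2)]
  have key2 : (fun y : ℝ => gaussianPDFReal 0 1 y * y ^ 2)
      = fun y : ℝ => (Real.sqrt (2 * π))⁻¹ * (y ^ 2 * Real.exp (-(1/2) * y ^ 2)) := by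
    funext y; rw [pdf01]; ring
  rw [key2]
  rw [integral_const_mul, aux_val]
  have hπ : Real.sqrt (2 * π) ≠ 0 := by positivity
  field_simp

lemma my_gauss_memℒp : MeasureTheory.MemLp id 2 (gaussianReal 0 1) := by
  rw [memLp_two_iff_integrable_sq aestronglyMeasurable_id]
  rw [gaussianReal_of_var_ne_zero _ one_ne_zero]
  rw [show gaussianPDF 0 1 = fun x => ((gaussianPDFReal 0 1 x).toNNReal : ENNReal) from rfl]
  rw [integrable_withDensity_iff_integrable_smul ((measurable_gaussianPDFReal 0 1).real_toNNReal)]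
  simp only [NNReal.smul_def, smul_eq_mul]
  have : (fun x : ℝ => ((gaussianPDFReal 0 1 x).toNNReal : ℝ) * (id x ^ 2))
      = fun x : ℝ => (Real.sqrt (2 * π))⁻¹ * (x ^ (2:ℝ) * Real.exp (-(1/2) * x ^ 2)) := by
    funext x
    rw [Real.coe_toNNReal _ (gaussianPDFReal_nonneg 0 1 x), pdf01, Real.rpow_two]
    simp only [id]; ring
  rw [this]
  exact (integrable_rpow_mul_exp_neg_mul_sq (by norm_num) (by norm_num)).const_mul _

end Gauss

section Helpers

variable {Ω : Type*} [MeasurableSpace Ω] {P : Measure Ω}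

lemma my_integrable_mul {f g : Ω → ℝ} (hf : MemLp f 2 P) (hg : MemLp g 2 P) :
    Integrable (fun ω => f ω * g ω) P := by
  refine Integrable.mono' ((hf.integrable_sq.add hg.integrable_sq).div_const 2)
    (hf.aestronglyMeasurable.mul hg.aestronglyMeasurable) (Filter.Eventually.of_forall fun ω => ?_)
  simp only [Pi.add_apply]
  rw [Real.norm_eq_abs, abs_mul]
  nlinarith [sq_abs (f ω), sq_abs (g ω), sq_nonneg (|f ω| - |g ω|), abs_nonneg (f ω),
    abs_nonneg (g ω)]

lemma sum_sq_dev (n : ℕ) (hn : (n:ℝ) ≠ 0) (a : Fin n → ℝ) :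
    ∑ i, (a i - (∑ i', a i') / n) ^ 2 = ∑ i, (a i) ^ 2 - (∑ i, a i) ^ 2 / n := by
  have h : ∑ i, (a i - (∑ i', a i') / n) ^ 2
      = ∑ i, ((a i)^2 - 2 * ((∑ i', a i')/n) * a i + ((∑ i', a i')/n)^2) := by
    refine Finset.sum_congr rfl fun i _ => by ring
  rw [h, Finset.sum_add_distrib, Finset.sum_sub_distrib, ← Finset.mul_sum, Finset.sum_const,
    Finset.card_univ, Fintype.card_fin, nsmul_eq_mul]
  field_simp
  ring

lemma fin_filter_card (q a b : ℕ) (hb : b ≤ q) :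
    (Finset.univ.filter (fun j : Fin q => a ≤ (j:ℕ) ∧ (j:ℕ) < b)).card = b - a := by
  rw [← Nat.card_Ico a b]
  refine Finset.card_bij (fun (j : Fin q) _ => (j : ℕ)) ?_ ?_ ?_
  · intro j hj
    simp only [Finset.mem_filter] at hj
    exact Finset.mem_Ico.mpr ⟨hj.2.1, hj.2.2⟩
  · intro j₁ h₁ j₂ h₂ h
    exact Fin.val_injective h
  · intro m hm
    rw [Finset.mem_Ico] at hm
    exact ⟨⟨m, lt_of_lt_of_le hm.2 hb⟩, by simp [hm.1, hm.2], rfl⟩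

end Helpers

open MeasureTheory ProbabilityTheory Finset

/-- Lower bound on the worst-case relative risk of the pooled sample variance estimator
over `s`-row-sparse means: there is a witness `σ > 0` and sparse `μ` achieving
relative error at least `(1/2) · s/q`. -/
theorem sample_variance_risk_lower_bound {Ω : Type*} [MeasurableSpace Ω] (P : Measure Ω)
    [IsProbabilityMeasure P] (n q s : ℕ) (hn : 2 ≤ n) (hq : 1 ≤ q) (hs : 1 ≤ s)
    (hns : n * s ≤ q)
    (ξ : Fin n × Fin q → Ω → ℝ) (hmeas : ∀ p, Measurable (ξ p))
    (hindep : iIndepFun ξ P)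
    (hgauss : ∀ p, Measure.map (ξ p) P = gaussianReal 0 1) :
    ∃ σ : ℝ, 0 < σ ∧ ∃ μ : Fin n → Fin q → ℝ,
      (∀ i, (Finset.univ.filter fun j => μ i j ≠ 0).card ≤ s) ∧
      (1 / 2 : ℝ) * (s / q) ≤
        (1 / σ ^ 2) *
          ∫ ω,
            |(∑ i, ∑ j,
                ((μ i j + σ * ξ (i, j) ω) -
                    (∑ i', (μ i' j + σ * ξ (i', j) ω)) / n) ^ 2) /
                ((n : ℝ) * q - q) - σ ^ 2| ∂P := by

  classical
  have hs0 : 0 < s := hs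
  have hn0 : ((n:ℝ)) ≠ 0 := Nat.cast_ne_zero.mpr (by omega)
  have hq0 : ((q:ℝ)) ≠ 0 := Nat.cast_ne_zero.mpr (by omega)
  have hn1 : ((n:ℝ)) - 1 ≠ 0 := by
    have : (2:ℝ) ≤ n := by exact_mod_cast hn
    intro h; linarith
  set μf : Fin n → Fin q → ℝ :=
    fun i j => if (i:ℕ)*s ≤ (j:ℕ) ∧ (j:ℕ) < (i:ℕ)*s + s then 1 else 0 with hμf
  refine ⟨1, one_pos, μf, ?_, ?_⟩
  · -- sparsity
    intro i
    have hfe : (Finset.univ.filter fun j => μf i j ≠ 0)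
        = Finset.univ.filter (fun j : Fin q => (i:ℕ)*s ≤ (j:ℕ) ∧ (j:ℕ) < (i:ℕ)*s + s) := by
      refine Finset.filter_congr fun j _ => ?_
      simp only [hμf]; split_ifs with h <;> simp [h]
    have hb : (i:ℕ)*s + s ≤ q := by
      calc (i:ℕ)*s + s = ((i:ℕ)+1)*s := by ring
      _ ≤ n*s := Nat.mul_le_mul_right s i.isLt
      _ ≤ q := hns
    rw [hfe, fin_filter_card q _ _ hb]
    omega
  · -- main bound
    simp only [one_mul, one_pow, div_one]
    have hξm2 : ∀ p, MemLp (ξ p) 2 P := by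
      intro p
      have h := my_gauss_memℒp
      rw [← hgauss p] at h
      exact (memLp_map_measure_iff aestronglyMeasurable_id (hmeas p).aemeasurable).mp h
    have hξint : ∀ p, Integrable (ξ p) P := fun p => (hξm2 p).integrable one_le_two
    have hξmean : ∀ p, ∫ ω, ξ p ω ∂P = 0 := by
      intro p
      have h : ∫ ω, ξ p ω ∂P = ∫ x, x ∂(Measure.map (ξ p) P) :=
        (integral_map (hmeas p).aemeasurable aestronglyMeasurable_id).symm
      rw [h, hgauss p, my_gauss_mean]
    have hξsq : ∀ p, ∫ ω, (ξ p ω) ^ 2 ∂P = 1 := by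
      intro p
      have h : ∫ ω, (ξ p ω) ^ 2 ∂P = ∫ x, x ^ 2 ∂(Measure.map (ξ p) P) :=
        (integral_map (hmeas p).aemeasurable (measurable_id.pow_const 2).aestronglyMeasurable).symm
      rw [h, hgauss p, my_gauss_sq]
    have hXm2 : ∀ (i : Fin n) (j : Fin q), MemLp (fun ω => μf i j + ξ (i,j) ω) 2 P :=
      fun i j => by
        have h := (memLp_const (μ := P) (p := 2) (μf i j)).add (hξm2 (i,j)); exact h
    have hSm2 : ∀ j : Fin q, MemLp (fun ω => ∑ i, (μf i j + ξ (i,j) ω)) 2 P :=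
      fun j => memLp_finset_sum _ (fun i _ => hXm2 i j)
    have E1 : ∀ (i : Fin n) (j : Fin q),
        ∫ ω, (μf i j + ξ (i,j) ω) ^ 2 ∂P = (μf i j) ^ 2 + 1 := by
      intro i j
      have hrw : (fun ω => (μf i j + ξ (i,j) ω) ^ 2)
          = fun ω => (μf i j) ^ 2 + ((2 * μf i j) * ξ (i,j) ω + (ξ (i,j) ω) ^ 2) :=
        funext fun ω => by ring
      have i1 : Integrable (fun ω => (2 * μf i j) * ξ (i,j) ω + (ξ (i,j) ω) ^ 2) P :=
        ((hξint (i,j)).const_mul _).add ((hξm2 (i,j)).integrable_sq)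
      have i2 : Integrable (fun ω => (2 * μf i j) * ξ (i,j) ω) P :=
        (hξint (i,j)).const_mul _
      rw [hrw, integral_add (integrable_const _) i1,
        integral_add i2 ((hξm2 (i,j)).integrable_sq),
        integral_const, integral_const_mul, hξmean, hξsq]
      simp [measure_univ]
    have hcross : ∀ (j : Fin q) (i i' : Fin n),
        ∫ ω, ξ (i,j) ω * ξ (i',j) ω ∂P = if i = i' then 1 else 0 := by
      intro j i i'
      by_cases h : i = i'
      · subst h
        rw [if_pos rfl, ← hξsq (i,j)]
        exact congrArg (fun g => ∫ ω, g ω ∂P) (funext fun ω => (pow_two (ξ (i,j) ω)).symm)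
      · rw [if_neg h]
        have hne : ((i, j) : Fin n × Fin q) ≠ (i', j) := fun hc => h (congrArg Prod.fst hc)
        have hI := (hindep.indepFun hne).integral_mul_eq_mul_integral (hmeas (i,j)).aestronglyMeasurable
          (hmeas (i',j)).aestronglyMeasurable
        rw [show (fun ω => ξ (i,j) ω * ξ (i',j) ω) = ξ (i,j) * ξ (i',j) from rfl, hI,
          hξmean, hξmean, mul_zero]
    have E2 : ∀ j : Fin q,
        ∫ ω, (∑ i, (μf i j + ξ (i,j) ω)) ^ 2 ∂P = (∑ i, μf i j) ^ 2 + n := by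
      intro j
      have hrw : (fun ω => (∑ i, (μf i j + ξ (i,j) ω)) ^ 2)
          = fun ω => (∑ i, μf i j) ^ 2 + ((2 * (∑ i, μf i j)) * (∑ i, ξ (i,j) ω)
              + ∑ i, ∑ i', ξ (i,j) ω * ξ (i',j) ω) := by
        funext ω
        rw [Finset.sum_add_distrib, ← Finset.sum_mul_sum]
        ring
      have hintsum : Integrable (fun ω => ∑ i, ξ (i,j) ω) P :=
        integrable_finset_sum _ fun i _ => hξint _
      have hprod : ∀ (i i' : Fin n), Integrable (fun ω => ξ (i,j) ω * ξ (i',j) ω) P :=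
        fun i i' => my_integrable_mul (hξm2 _) (hξm2 _)
      have hintdouble : Integrable (fun ω => ∑ i, ∑ i', ξ (i,j) ω * ξ (i',j) ω) P :=
        integrable_finset_sum _ fun i _ => integrable_finset_sum _ fun i' _ => hprod i i'
      have hinner : ∀ i : Fin n, ∫ ω, ∑ i', ξ (i,j) ω * ξ (i',j) ω ∂P = 1 := by
        intro i
        rw [integral_finset_sum _ (fun i' _ => hprod i i')]
        calc ∑ i', ∫ ω, ξ (i,j) ω * ξ (i',j) ω ∂P
            = ∑ i' : Fin n, if i = i' then (1:ℝ) else 0 :=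
              Finset.sum_congr rfl fun i' _ => hcross j i i'
        _ = 1 := by simp
      have i1 : Integrable (fun ω => (2 * (∑ i, μf i j)) * (∑ i, ξ (i,j) ω)
          + ∑ i, ∑ i', ξ (i,j) ω * ξ (i',j) ω) P := (hintsum.const_mul _).add hintdouble
      have i2 : Integrable (fun ω => (2 * (∑ i, μf i j)) * (∑ i, ξ (i,j) ω)) P :=
        hintsum.const_mul _
      rw [hrw, integral_add (integrable_const _) i1,
        integral_add i2 hintdouble, integral_const, integral_const_mul,
        integral_finset_sum _ (fun i _ => hξint _),
        integral_finset_sum _ (fun i _ => integrable_finset_sum _ fun i' _ => hprod i i')]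
      have hm : ∑ i : Fin n, ∫ ω, ξ (i,j) ω ∂P = 0 := by
        simp [hξmean]
      have hi : ∑ i : Fin n, ∫ ω, ∑ i', ξ (i,j) ω * ξ (i',j) ω ∂P = (n:ℝ) := by
        rw [Finset.sum_congr rfl fun i _ => hinner i]
        simp
      rw [hm, hi]
      simp [measure_univ]
    have colInt : ∀ j : Fin q, Integrable
        (fun ω => (∑ i, (μf i j + ξ (i,j) ω) ^ 2) - (∑ i, (μf i j + ξ (i,j) ω)) ^ 2 / (n:ℝ)) P :=
      fun j => (integrable_finset_sum _ (fun i _ => (hXm2 i j).integrable_sq)).sub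
        (((hSm2 j).integrable_sq).div_const _)
    have hcol : ∀ j : Fin q,
        ∫ ω, ((∑ i, (μf i j + ξ (i,j) ω) ^ 2) - (∑ i, (μf i j + ξ (i,j) ω)) ^ 2 / (n:ℝ)) ∂P
          = ((∑ i, (μf i j) ^ 2) + n) - ((∑ i, μf i j) ^ 2 + n) / (n:ℝ) := by
      intro j
      rw [integral_sub (integrable_finset_sum _ (fun i _ => (hXm2 i j).integrable_sq))
          (((hSm2 j).integrable_sq).div_const _), integral_div,
        integral_finset_sum _ (fun i _ => (hXm2 i j).integrable_sq), E2]
      have h1 : ∑ i, ∫ ω, (μf i j + ξ (i,j) ω) ^ 2 ∂P = ∑ i, ((μf i j) ^ 2 + 1) :=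
        Finset.sum_congr rfl fun i _ => E1 i j
      rw [h1, Finset.sum_add_distrib, Finset.sum_const, Finset.card_univ, Fintype.card_fin,
        nsmul_eq_mul, mul_one]
    have hμsq : ∀ (i : Fin n) (j : Fin q), (μf i j) ^ 2 = μf i j := by
      intro i j; simp only [hμf]; split_ifs <;> norm_num
    have ht : ∀ j : Fin q, (∑ i, μf i j) = if (j:ℕ) < n*s then 1 else 0 := by
      intro j
      by_cases hj : (j:ℕ) < n*s
      · rw [if_pos hj]
        have hlt : (j:ℕ)/s < n := by rwa [Nat.div_lt_iff_lt_mul hs0]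
        rw [Finset.sum_eq_single (⟨(j:ℕ)/s, hlt⟩ : Fin n)]
        · simp only [hμf]
          rw [if_pos]
          have h1 := Nat.div_add_mod' (j:ℕ) s
          have h2 := Nat.mod_lt (j:ℕ) hs0
          exact ⟨Nat.div_mul_le_self _ _, by omega⟩
        · intro i _ hne
          simp only [hμf]
          rw [if_neg]
          rintro ⟨h1, h2⟩
          apply hne
          have heq : (i:ℕ) = (j:ℕ)/s := by
            refine (Nat.div_eq_of_lt_le ?_ ?_).symm
            · exact h1
            · rw [Nat.succ_mul]; exact h2
          exact Fin.ext heq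
        · intro h; exact absurd (Finset.mem_univ _) h
      · rw [if_neg hj]
        refine Finset.sum_eq_zero fun i _ => ?_
        simp only [hμf]
        rw [if_neg]
        rintro ⟨h1, h2⟩
        have : (i:ℕ)*s + s ≤ n*s := by
          calc (i:ℕ)*s + s = ((i:ℕ)+1)*s := by ring
          _ ≤ n*s := Nat.mul_le_mul_right s i.isLt
        omega
    have htsq : ∀ j : Fin q, (∑ i, μf i j) ^ 2 = ∑ i, μf i j := by
      intro j; rw [ht j]; split_ifs <;> norm_num
    have hts : (∑ j : Fin q, ∑ i, μf i j) = ((n*s : ℕ) : ℝ) := by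
      have h1 : (∑ j : Fin q, ∑ i, μf i j)
          = ∑ j : Fin q, (if (j:ℕ) < n*s then (1:ℝ) else 0) :=
        Finset.sum_congr rfl fun j _ => ht j
      have hcardf : (Finset.univ.filter (fun j : Fin q => (j:ℕ) < n*s)).card = n*s := by
        have he : (Finset.univ.filter (fun j : Fin q => (j:ℕ) < n*s))
            = Finset.univ.filter (fun j : Fin q => 0 ≤ (j:ℕ) ∧ (j:ℕ) < n*s) :=
          Finset.filter_congr fun j _ => by simp
        rw [he, fin_filter_card q 0 (n*s) hns]
        omega
      rw [h1, Finset.sum_boole, hcardf]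
    set S : Ω → ℝ := fun ω => ∑ i, ∑ j,
      ((μf i j + ξ (i,j) ω) - (∑ i', (μf i' j + ξ (i',j) ω)) / (n:ℝ)) ^ 2 with hSdef
    have hpt : S = fun ω => ∑ j,
        ((∑ i, (μf i j + ξ (i,j) ω) ^ 2) - (∑ i, (μf i j + ξ (i,j) ω)) ^ 2 / (n:ℝ)) := by
      funext ω
      show (∑ i, ∑ j,
        ((μf i j + ξ (i,j) ω) - (∑ i', (μf i' j + ξ (i',j) ω)) / (n:ℝ)) ^ 2) = _
      rw [Finset.sum_comm]
      exact Finset.sum_congr rfl fun j _ => sum_sq_dev n hn0 (fun i => μf i j + ξ (i,j) ω)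
    have hSint : Integrable S P := by
      rw [hpt]; exact integrable_finset_sum _ fun j _ => colInt j
    have hSval : ∫ ω, S ω ∂P = (s:ℝ) * ((n:ℝ)-1) + (q:ℝ) * ((n:ℝ)-1) := by
      rw [hpt, integral_finset_sum _ (fun j _ => colInt j),
        Finset.sum_congr rfl (fun j _ => hcol j)]
      have h2 : ∀ j ∈ Finset.univ, ((∑ i, (μf i j) ^ 2) + (n:ℝ)) - ((∑ i, μf i j) ^ 2 + n) / (n:ℝ)
          = ((∑ i, μf i j) + (n:ℝ)) - ((∑ i, μf i j) + n) / (n:ℝ) := by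
        intro j _
        rw [htsq j, Finset.sum_congr rfl (fun i _ => hμsq i j)]
      rw [Finset.sum_congr rfl h2, Finset.sum_sub_distrib, ← Finset.sum_div,
        Finset.sum_add_distrib, hts]
      simp only [Finset.sum_const, Finset.card_univ, Fintype.card_fin, nsmul_eq_mul]
      push_cast
      field_simp
    have hdz : ((n:ℝ)*q - q) ≠ 0 := by
      rw [show ((n:ℝ)*q - q) = (q:ℝ)*((n:ℝ)-1) by ring]
      exact mul_ne_zero hq0 hn1
    have hval : ∫ ω, (S ω / ((n:ℝ)*q - q) - 1) ∂P = (s:ℝ)/q := by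
      rw [integral_sub (hSint.div_const _) (integrable_const _), integral_div, hSval,
        integral_const]
      simp only [measure_univ, probReal_univ, ENNReal.toReal_one, smul_eq_mul, one_mul, mul_one]
      rw [show ((n:ℝ)*q - q) = (q:ℝ)*((n:ℝ)-1) by ring]
      field_simp
      ring
    calc (1/2:ℝ) * (s/q) ≤ (s:ℝ)/q := by
          have h1 : 0 ≤ (s:ℝ)/q := by positivity
          linarith
    _ = ∫ ω, (S ω / ((n:ℝ)*q - q) - 1) ∂P := hval.symm
    _ ≤ |∫ ω, (S ω / ((n:ℝ)*q - q) - 1) ∂P| := le_abs_self _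
    _ ≤ ∫ ω, |S ω / ((n:ℝ)*q - q) - 1| ∂P := by
          simpa [Real.norm_eq_abs] using
            norm_integral_le_integral_norm (μ := P) (fun ω => S ω / ((n:ℝ)*q - q) - 1)
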